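/- Let S be the square of diameter 1 in the ℓ1-plane given by S = {(x,y) ∈ ℝ² : |x − 1/2| + |y| ≤ 1/2}, which has the origin (0,0) as one of its corners. For every sequence of n ≤ 5 points in S, there exists a wake-up tree rooted at (0,0) spanning these points, with edge lengths measured in the ℓ1-norm, whose makespan is at most 2. -/

import Mathlib

/-- Binary trees with labeled nodes. A wake-up tree with source `s` is modeled by the
subtree hanging at the unique child of the root (the root itself is labeled `s`). -/
inductive BTree (α : Type) where
  | nil : BTree α
  | node : α → BTree α → BTree α → BTree α

namespace BTree
/-- The multiset of labels of a binary tree. -/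
def labels {α : Type} : BTree α → Multiset α
  | .nil => 0
  | .node p l r => p ::ₘ (labels l + labels r)
end BTree

/-- `η` is a norm on `ℝ²`. -/
def IsNorm (η : ℝ × ℝ → ℝ) : Prop :=
  (∀ x, η x = 0 ↔ x = 0) ∧
  (∀ (a : ℝ) (x : ℝ × ℝ), η (a • x) = |a| * η x) ∧
  (∀ x y : ℝ × ℝ, η (x + y) ≤ η x + η y)

/-- The makespan of a wake-up tree: maximum total η-edge-length of a root-to-leaf path,
where the previous (parent) position is `s`. -/
noncomputable def makespan (η : ℝ × ℝ → ℝ) : ℝ × ℝ → BTree (ℝ × ℝ) → ℝ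
  | _, .nil => 0
  | s, .node p l r => η (p - s) + max (makespan η p l) (makespan η p r)

/-- `γₙ(η)`: sup over sequences of `n` points in the closed unit η-ball of the minimum
makespan of a wake-up tree rooted at the origin spanning them. -/
noncomputable def gammaN (η : ℝ × ℝ → ℝ) (n : ℕ) : ℝ :=
  sSup { m : ℝ | ∃ ps : List (ℝ × ℝ), ps.length = n ∧ (∀ p ∈ ps, η p ≤ 1) ∧
    m = sInf { t : ℝ | ∃ T : BTree (ℝ × ℝ), T.labels = ↑ps ∧ makespan η 0 T = t } }

/-- The wake-up ratio `γ(η) = sup_n γₙ(η)`. -/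
noncomputable def gamma (η : ℝ × ℝ → ℝ) : ℝ := sSup (Set.range (gammaN η))

/-- The ℓ1-norm on ℝ². -/
noncomputable def l1 (p : ℝ × ℝ) : ℝ := |p.1| + |p.2|

/-- The square of ℓ1-diameter 1 with corner at the origin (ℓ1-ball of radius 1/2
centered at (1/2, 0)). -/
def squareS : Set (ℝ × ℝ) := { p | |p.1 - 1/2| + |p.2| ≤ 1/2 }

namespace FTPAux

lemma l1_nonneg (p : ℝ × ℝ) : 0 ≤ l1 p := by
  unfold l1; positivity

lemma maxl1 (x : ℝ × ℝ) : max (l1 x) (0:ℝ) = l1 x := max_eq_left (l1_nonneg x)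

lemma l1_sub_comm (p q : ℝ × ℝ) : l1 (p - q) = l1 (q - p) := by
  simp only [l1, Prod.fst_sub, Prod.snd_sub, abs_sub_comm]

lemma sqf {p : ℝ × ℝ} (h : p ∈ squareS) :
    p.2 ≤ p.1 ∧ -p.1 ≤ p.2 ∧ p.2 ≤ 1 - p.1 ∧ p.1 - 1 ≤ p.2 := by
  simp only [squareS, Set.mem_setOf_eq] at h
  have h1 := le_abs_self (p.1 - 1/2)
  have h2 := neg_abs_le (p.1 - 1/2)
  have h3 := le_abs_self p.2
  have h4 := neg_abs_le p.2
  exact ⟨by linarith, by linarith, by linarith, by linarith⟩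

lemma M_le_one {p : ℝ × ℝ} (h : p ∈ squareS) : l1 p ≤ 1 := by
  obtain ⟨a, b, c, d⟩ := sqf h
  simp only [l1]
  rcases abs_cases p.1 with ⟨h1, _⟩ | ⟨h1, _⟩ <;>
    rcases abs_cases p.2 with ⟨h2, _⟩ | ⟨h2, _⟩ <;> rw [h1, h2] <;> linarith

lemma diam {p q : ℝ × ℝ} (hp : p ∈ squareS) (hq : q ∈ squareS) : l1 (p - q) ≤ 1 := by
  obtain ⟨a1, a2, a3, a4⟩ := sqf hp
  obtain ⟨b1, b2, b3, b4⟩ := sqf hq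
  simp only [l1, Prod.fst_sub, Prod.snd_sub]
  rcases abs_cases (p.1 - q.1) with ⟨h1, _⟩ | ⟨h1, _⟩ <;>
    rcases abs_cases (p.2 - q.2) with ⟨h2, _⟩ | ⟨h2, _⟩ <;> rw [h1, h2] <;> linarith

lemma D1 {p q : ℝ × ℝ} (hp : p ∈ squareS) (hq : q ∈ squareS)
    (hyp : 0 ≤ p.2) (hyq : 0 ≤ q.2) (hv : q.1 - q.2 ≤ p.1 - p.2)
    (h1 : 1 < l1 p + l1 (p - q) ∨ p = q) (h2 : 1 < l1 q + l1 (q - p) ∨ p = q) :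
    l1 (q - p) ≤ (p.1 - p.2) - (q.1 - q.2) := by
  rcases h1 with h1 | rfl
  · rcases h2 with h2 | rfl
    · obtain ⟨hpa, hpb, hpc, hpd⟩ := sqf hp
      obtain ⟨hqa, hqb, hqc, hqd⟩ := sqf hq
      have hxp : 0 ≤ p.1 := by linarith
      have hxq : 0 ≤ q.1 := by linarith
      rw [l1_sub_comm] at h1
      simp only [l1, Prod.fst_sub, Prod.snd_sub] at h1 h2 ⊢
      rw [abs_of_nonneg hxp, abs_of_nonneg hyp] at h1
      rw [abs_of_nonneg hxq, abs_of_nonneg hyq] at h2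
      rcases abs_cases (q.1 - p.1) with ⟨e1, s1⟩ | ⟨e1, s1⟩ <;>
        rcases abs_cases (q.2 - p.2) with ⟨e2, s2⟩ | ⟨e2, s2⟩ <;>
        rw [e1, e2] at h1 h2 ⊢ <;> linarith
    · simp [l1, sub_self]
  · simp [l1, sub_self]

lemma D2 {p q : ℝ × ℝ} (hp : p ∈ squareS) (hq : q ∈ squareS)
    (hyp : p.2 ≤ 0) (hyq : q.2 ≤ 0) (hv : q.1 + q.2 ≤ p.1 + p.2)
    (h1 : 1 < l1 p + l1 (p - q) ∨ p = q) (h2 : 1 < l1 q + l1 (q - p) ∨ p = q) :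
    l1 (q - p) ≤ (p.1 + p.2) - (q.1 + q.2) := by
  rcases h1 with h1 | rfl
  · rcases h2 with h2 | rfl
    · obtain ⟨hpa, hpb, hpc, hpd⟩ := sqf hp
      obtain ⟨hqa, hqb, hqc, hqd⟩ := sqf hq
      have hxp : 0 ≤ p.1 := by linarith
      have hxq : 0 ≤ q.1 := by linarith
      rw [l1_sub_comm] at h1
      simp only [l1, Prod.fst_sub, Prod.snd_sub] at h1 h2 ⊢
      rw [abs_of_nonneg hxp, abs_of_nonpos hyp] at h1
      rw [abs_of_nonneg hxq, abs_of_nonpos hyq] at h2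
      rcases abs_cases (q.1 - p.1) with ⟨e1, s1⟩ | ⟨e1, s1⟩ <;>
        rcases abs_cases (q.2 - p.2) with ⟨e2, s2⟩ | ⟨e2, s2⟩ <;>
        rw [e1, e2] at h1 h2 ⊢ <;> linarith
    · simp [l1, sub_self]
  · simp [l1, sub_self]

lemma D3i {p q : ℝ × ℝ} (hp : p ∈ squareS) (hq : q ∈ squareS)
    (hyp : 0 ≤ p.2) (hyq : q.2 ≤ 0) (hcond : q.1 + q.2 ≤ p.1 - p.2)
    (h1 : 1 < l1 p + l1 (p - q) ∨ p = q) (h2 : 1 < l1 q + l1 (q - p) ∨ p = q) :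
    l1 (q - p) ≤ 1 - q.1 - q.2 := by
  obtain ⟨hpa, hpb, hpc, hpd⟩ := sqf hp
  obtain ⟨hqa, hqb, hqc, hqd⟩ := sqf hq
  rcases h1 with h1 | rfl
  · rcases h2 with h2 | rfl
    · have hxp : 0 ≤ p.1 := by linarith
      have hxq : 0 ≤ q.1 := by linarith
      rw [l1_sub_comm] at h1
      simp only [l1, Prod.fst_sub, Prod.snd_sub] at h1 h2 ⊢
      rw [abs_of_nonneg hxp, abs_of_nonneg hyp] at h1
      rw [abs_of_nonneg hxq, abs_of_nonpos hyq] at h2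
      rcases abs_cases (q.1 - p.1) with ⟨e1, s1⟩ | ⟨e1, s1⟩ <;>
        rcases abs_cases (q.2 - p.2) with ⟨e2, s2⟩ | ⟨e2, s2⟩ <;>
        rw [e1, e2] at h1 h2 ⊢ <;> linarith
    · simp only [l1, sub_self]; simp; linarith
  · simp only [l1, sub_self]; simp; linarith

lemma D3ii {p q : ℝ × ℝ} (hp : p ∈ squareS) (hq : q ∈ squareS)
    (hyp : 0 ≤ p.2) (hyq : q.2 ≤ 0) (hcond : p.1 - p.2 ≤ q.1 + q.2)
    (h1 : 1 < l1 p + l1 (p - q) ∨ p = q) (h2 : 1 < l1 q + l1 (q - p) ∨ p = q) :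
    l1 (q - p) ≤ 1 - p.1 + p.2 := by
  obtain ⟨hpa, hpb, hpc, hpd⟩ := sqf hp
  obtain ⟨hqa, hqb, hqc, hqd⟩ := sqf hq
  rcases h1 with h1 | rfl
  · rcases h2 with h2 | rfl
    · have hxp : 0 ≤ p.1 := by linarith
      have hxq : 0 ≤ q.1 := by linarith
      rw [l1_sub_comm] at h1
      simp only [l1, Prod.fst_sub, Prod.snd_sub] at h1 h2 ⊢
      rw [abs_of_nonneg hxp, abs_of_nonneg hyp] at h1
      rw [abs_of_nonneg hxq, abs_of_nonpos hyq] at h2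
      rcases abs_cases (q.1 - p.1) with ⟨e1, s1⟩ | ⟨e1, s1⟩ <;>
        rcases abs_cases (q.2 - p.2) with ⟨e2, s2⟩ | ⟨e2, s2⟩ <;>
        rw [e1, e2] at h1 h2 ⊢ <;> linarith
    · simp only [l1, sub_self]; simp; linarith
  · simp only [l1, sub_self]; simp; linarith


def Good (l : List (ℝ × ℝ)) : Prop :=
  ∃ T : BTree (ℝ × ℝ), T.labels = ↑l ∧ makespan l1 0 T ≤ 2

lemma good_perm {l l' : List (ℝ × ℝ)} (h : l.Perm l') (hg : Good l') : Good l := by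
  obtain ⟨T, hT, hm⟩ := hg
  exact ⟨T, by rw [hT]; exact Multiset.coe_eq_coe.2 h.symm, hm⟩

/-- the reflection `y ↦ -y`. -/
def fl (p : ℝ × ℝ) : ℝ × ℝ := (p.1, -p.2)

lemma fl_fl (p : ℝ × ℝ) : fl (fl p) = p := by simp [fl]

lemma l1_fl (p : ℝ × ℝ) : l1 (fl p) = l1 p := by simp [fl, l1]

lemma l1_fl_sub (p q : ℝ × ℝ) : l1 (fl p - fl q) = l1 (p - q) := by
  simp only [fl, l1, Prod.fst_sub, Prod.snd_sub]
  rw [show -p.2 - -q.2 = -(p.2 - q.2) by ring, abs_neg]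

lemma fl_mem {p : ℝ × ℝ} (h : p ∈ squareS) : fl p ∈ squareS := by
  simpa [fl, squareS] using h

def bmap : BTree (ℝ × ℝ) → BTree (ℝ × ℝ)
  | .nil => .nil
  | .node p l r => .node (fl p) (bmap l) (bmap r)

lemma bmap_labels (T : BTree (ℝ × ℝ)) : (bmap T).labels = T.labels.map fl := by
  induction T with
  | nil => simp [bmap, BTree.labels]
  | node p l r ihl ihr => simp [bmap, BTree.labels, ihl, ihr]

lemma bmap_makespan (T : BTree (ℝ × ℝ)) : ∀ s, makespan l1 (fl s) (bmap T) = makespan l1 s T := by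
  induction T with
  | nil => intro s; simp [bmap, makespan]
  | node p l r ihl ihr => intro s; simp [bmap, makespan, l1_fl_sub, ihl, ihr]

lemma good_fl {l : List (ℝ × ℝ)} (h : Good (l.map fl)) : Good l := by
  obtain ⟨T, hT, hm⟩ := h
  refine ⟨bmap T, ?_, ?_⟩
  · rw [bmap_labels, hT]
    rw [← Multiset.map_coe, Multiset.map_map]
    simp [Function.comp, fl_fl]
  · have h0 : (0 : ℝ × ℝ) = fl 0 := by simp [fl]; rfl
    rw [h0, bmap_makespan]; exact hm

lemma extract_min (κ : ℝ × ℝ → ℝ) :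
    ∀ l : List (ℝ × ℝ), l ≠ [] → ∃ a t, l.Perm (a :: t) ∧ ∀ b ∈ t, κ a ≤ κ b := by
  intro l
  induction l with
  | nil => intro h; exact absurd rfl h
  | cons x xs ih =>
    intro _
    by_cases hxs : xs = []
    · subst hxs; exact ⟨x, [], List.Perm.refl _, by simp⟩
    · obtain ⟨m, t, hp, hm⟩ := ih hxs
      rcases le_total (κ x) (κ m) with h | h
      · refine ⟨x, xs, List.Perm.refl _, ?_⟩
        intro b hb
        rcases List.mem_cons.1 (hp.mem_iff.1 hb) with hb' | hb'
        · exact hb' ▸ h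
        · exact le_trans h (hm b hb')
      · refine ⟨m, x :: t, ?_, ?_⟩
        · exact (hp.cons x).trans (List.Perm.swap m x t)
        · intro b hb
          rcases List.mem_cons.1 hb with hb' | hb'
          · exact hb' ▸ h
          · exact hm b hb'

lemma leafW1 {a c r s b : ℝ × ℝ}
    (ha : a ∈ squareS) (hc : c ∈ squareS) (hr : r ∈ squareS) (hs : s ∈ squareS) (hb : b ∈ squareS)
    (hle : l1 a + l1 (c - a) ≤ 1) : Good [a, c, r, s, b] := by
  refine ⟨.node a (.node b .nil .nil) (.node c (.node r .nil .nil) (.node s .nil .nil)), ?_, ?_⟩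
  · exact Multiset.coe_eq_coe.2 ((List.perm_append_comm (l₁ := [b]) (l₂ := [c, r, s])).cons a)
  · have B1 : l1 (b - a) ≤ 1 := diam hb ha
    have B2 : l1 (r - c) ≤ 1 := diam hr hc
    have B3 : l1 (s - c) ≤ 1 := diam hs hc
    have B4 : (0:ℝ) ≤ l1 a := l1_nonneg a
    have B5 : (0:ℝ) ≤ l1 (c - a) := l1_nonneg _
    simp only [makespan, sub_zero, max_self, add_zero]
    rcases le_total (l1 (r - c)) (l1 (s - c)) with h | h
    · rw [max_eq_right h]
      rcases le_total (l1 (b - a)) (l1 (c - a) + l1 (s - c)) with h' | h'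
      · rw [max_eq_right h']; linarith
      · rw [max_eq_left h']; linarith
    · rw [max_eq_left h]
      rcases le_total (l1 (b - a)) (l1 (c - a) + l1 (r - c)) with h' | h'
      · rw [max_eq_right h']; linarith
      · rw [max_eq_left h']; linarith

lemma leafU {a c d e b : ℝ × ℝ}
    (ha : a ∈ squareS) (hc : c ∈ squareS) (hd : d ∈ squareS) (he : e ∈ squareS) (hb : b ∈ squareS)
    (hya : 0 ≤ a.2) (hyc : 0 ≤ c.2) (hyd : 0 ≤ d.2) (hye : 0 ≤ e.2)
    (hac : c.1 - c.2 ≤ a.1 - a.2) (hcd : d.1 - d.2 ≤ c.1 - c.2) (hce : e.1 - e.2 ≤ c.1 - c.2)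
    (f1 : 1 < l1 a + l1 (a - c) ∨ a = c) (f2 : 1 < l1 c + l1 (c - a) ∨ a = c)
    (f3 : 1 < l1 c + l1 (c - d) ∨ c = d) (f4 : 1 < l1 d + l1 (d - c) ∨ c = d)
    (f5 : 1 < l1 c + l1 (c - e) ∨ c = e) (f6 : 1 < l1 e + l1 (e - c) ∨ c = e) :
    Good [a, c, d, e, b] := by
  refine ⟨.node a (.node b .nil .nil) (.node c (.node d .nil .nil) (.node e .nil .nil)), ?_, ?_⟩
  · exact Multiset.coe_eq_coe.2 ((List.perm_append_comm (l₁ := [b]) (l₂ := [c, d, e])).cons a)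
  · have B1 : l1 (c - a) ≤ (a.1 - a.2) - (c.1 - c.2) := D1 ha hc hya hyc hac f1 f2
    have B2 : l1 (d - c) ≤ (c.1 - c.2) - (d.1 - d.2) := D1 hc hd hyc hyd hcd f3 f4
    have B3 : l1 (e - c) ≤ (c.1 - c.2) - (e.1 - e.2) := D1 hc he hyc hye hce f5 f6
    have B4 : l1 (b - a) ≤ 1 := diam hb ha
    have B5 : l1 a ≤ 1 := M_le_one ha
    obtain ⟨sa1, sa2, sa3, sa4⟩ := sqf ha
    obtain ⟨sd1, sd2, sd3, sd4⟩ := sqf hd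
    obtain ⟨se1, se2, se3, se4⟩ := sqf he
    simp only [makespan, sub_zero, max_self, add_zero]
    rcases le_total (l1 (d - c)) (l1 (e - c)) with h | h
    · rw [max_eq_right h]
      rcases le_total (l1 (b - a)) (l1 (c - a) + l1 (e - c)) with h' | h'
      · rw [max_eq_right h']; linarith
      · rw [max_eq_left h']; linarith
    · rw [max_eq_left h]
      rcases le_total (l1 (b - a)) (l1 (c - a) + l1 (d - c)) with h' | h'
      · rw [max_eq_right h']; linarith
      · rw [max_eq_left h']; linarith

lemma leaf32i {a c d m n : ℝ × ℝ}
    (ha : a ∈ squareS) (hc : c ∈ squareS) (hd : d ∈ squareS) (hm : m ∈ squareS) (hn : n ∈ squareS)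
    (hya : 0 ≤ a.2) (hyc : 0 ≤ c.2) (hyd : 0 ≤ d.2) (hym : m.2 ≤ 0) (hyn : n.2 ≤ 0)
    (hac : c.1 - c.2 ≤ a.1 - a.2) (hcd : d.1 - d.2 ≤ c.1 - c.2)
    (hmn : n.1 + n.2 ≤ m.1 + m.2) (hcond : m.1 + m.2 ≤ a.1 - a.2)
    (f1 : 1 < l1 a + l1 (a - c) ∨ a = c) (f2 : 1 < l1 c + l1 (c - a) ∨ a = c)
    (f3 : 1 < l1 c + l1 (c - d) ∨ c = d) (f4 : 1 < l1 d + l1 (d - c) ∨ c = d)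
    (f5 : 1 < l1 a + l1 (a - m) ∨ a = m) (f6 : 1 < l1 m + l1 (m - a) ∨ a = m)
    (f7 : 1 < l1 m + l1 (m - n) ∨ m = n) (f8 : 1 < l1 n + l1 (n - m) ∨ m = n) :
    Good [a, c, d, m, n] := by
  refine ⟨.node a (.node c (.node d .nil .nil) .nil) (.node m (.node n .nil .nil) .nil), ?_, ?_⟩
  · rfl
  · have B1 : l1 (c - a) ≤ (a.1 - a.2) - (c.1 - c.2) := D1 ha hc hya hyc hac f1 f2
    have B2 : l1 (d - c) ≤ (c.1 - c.2) - (d.1 - d.2) := D1 hc hd hyc hyd hcd f3 f4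
    have B3 : l1 (m - a) ≤ 1 - m.1 - m.2 := D3i ha hm hya hym hcond f5 f6
    have B4 : l1 (n - m) ≤ (m.1 + m.2) - (n.1 + n.2) := D2 hm hn hym hyn hmn f7 f8
    have B5 : l1 a ≤ 1 := M_le_one ha
    obtain ⟨sa1, sa2, sa3, sa4⟩ := sqf ha
    obtain ⟨sd1, sd2, sd3, sd4⟩ := sqf hd
    obtain ⟨sn1, sn2, sn3, sn4⟩ := sqf hn
    simp only [makespan, sub_zero, max_self, add_zero, maxl1]
    rcases le_total (l1 (c - a) + l1 (d - c)) (l1 (m - a) + l1 (n - m)) with h | h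
    · rw [max_eq_right h]; linarith
    · rw [max_eq_left h]; linarith

lemma leaf32ii {a c d m n : ℝ × ℝ}
    (ha : a ∈ squareS) (hc : c ∈ squareS) (hd : d ∈ squareS) (hm : m ∈ squareS) (hn : n ∈ squareS)
    (hya : 0 ≤ a.2) (hyc : 0 ≤ c.2) (hyd : 0 ≤ d.2) (hym : m.2 ≤ 0)
    (hac : c.1 - c.2 ≤ a.1 - a.2) (had : d.1 - d.2 ≤ a.1 - a.2)
    (hcond : a.1 - a.2 ≤ m.1 + m.2)
    (f1 : 1 < l1 a + l1 (a - c) ∨ a = c) (f2 : 1 < l1 c + l1 (c - a) ∨ a = c)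
    (f3 : 1 < l1 a + l1 (a - d) ∨ a = d) (f4 : 1 < l1 d + l1 (d - a) ∨ a = d)
    (f5 : 1 < l1 a + l1 (a - m) ∨ a = m) (f6 : 1 < l1 m + l1 (m - a) ∨ a = m) :
    Good [a, c, d, m, n] := by
  refine ⟨.node m (.node n .nil .nil) (.node a (.node c .nil .nil) (.node d .nil .nil)), ?_, ?_⟩
  · exact Multiset.coe_eq_coe.2 (List.perm_append_comm (l₁ := [m, n]) (l₂ := [a, c, d]))
  · have B1 : l1 (c - a) ≤ (a.1 - a.2) - (c.1 - c.2) := D1 ha hc hya hyc hac f1 f2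
    have B2 : l1 (d - a) ≤ (a.1 - a.2) - (d.1 - d.2) := D1 ha hd hya hyd had f3 f4
    have B3 : l1 (a - m) ≤ 1 - a.1 + a.2 := by
      rw [l1_sub_comm]; exact D3ii ha hm hya hym hcond f5 f6
    have B4 : l1 (n - m) ≤ 1 := diam hn hm
    have B5 : l1 m ≤ 1 := M_le_one hm
    obtain ⟨sc1, sc2, sc3, sc4⟩ := sqf hc
    obtain ⟨sd1, sd2, sd3, sd4⟩ := sqf hd
    simp only [makespan, sub_zero, max_self, add_zero]
    rcases le_total (l1 (c - a)) (l1 (d - a)) with h | h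
    · rw [max_eq_right h]
      rcases le_total (l1 (n - m)) (l1 (a - m) + l1 (d - a)) with h' | h'
      · rw [max_eq_right h']; linarith
      · rw [max_eq_left h']; linarith
    · rw [max_eq_left h]
      rcases le_total (l1 (n - m)) (l1 (a - m) + l1 (c - a)) with h' | h'
      · rw [max_eq_right h']; linarith
      · rw [max_eq_left h']; linarith

lemma leafW14 {a c r b : ℝ × ℝ}
    (ha : a ∈ squareS) (hc : c ∈ squareS) (hr : r ∈ squareS) (hb : b ∈ squareS)
    (hle : l1 a + l1 (c - a) ≤ 1) : Good [a, c, r, b] := by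
  refine ⟨.node a (.node b .nil .nil) (.node c (.node r .nil .nil) .nil), ?_, ?_⟩
  · exact Multiset.coe_eq_coe.2 ((List.perm_append_comm (l₁ := [b]) (l₂ := [c, r])).cons a)
  · have B1 : l1 (b - a) ≤ 1 := diam hb ha
    have B2 : l1 (r - c) ≤ 1 := diam hr hc
    have B4 : (0:ℝ) ≤ l1 a := l1_nonneg a
    have B5 : (0:ℝ) ≤ l1 (c - a) := l1_nonneg _
    simp only [makespan, sub_zero, max_self, add_zero, maxl1]
    rcases le_total (l1 (b - a)) (l1 (c - a) + l1 (r - c)) with h' | h'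
    · rw [max_eq_right h']; linarith
    · rw [max_eq_left h']; linarith

lemma leafU4 {a c d b : ℝ × ℝ}
    (ha : a ∈ squareS) (hc : c ∈ squareS) (hd : d ∈ squareS) (hb : b ∈ squareS)
    (hya : 0 ≤ a.2) (hyc : 0 ≤ c.2) (hyd : 0 ≤ d.2)
    (hac : c.1 - c.2 ≤ a.1 - a.2) (hcd : d.1 - d.2 ≤ c.1 - c.2)
    (f1 : 1 < l1 a + l1 (a - c) ∨ a = c) (f2 : 1 < l1 c + l1 (c - a) ∨ a = c)
    (f3 : 1 < l1 c + l1 (c - d) ∨ c = d) (f4 : 1 < l1 d + l1 (d - c) ∨ c = d) :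
    Good [a, c, d, b] := by
  refine ⟨.node a (.node b .nil .nil) (.node c (.node d .nil .nil) .nil), ?_, ?_⟩
  · exact Multiset.coe_eq_coe.2 ((List.perm_append_comm (l₁ := [b]) (l₂ := [c, d])).cons a)
  · have B1 : l1 (c - a) ≤ (a.1 - a.2) - (c.1 - c.2) := D1 ha hc hya hyc hac f1 f2
    have B2 : l1 (d - c) ≤ (c.1 - c.2) - (d.1 - d.2) := D1 hc hd hyc hyd hcd f3 f4
    have B4 : l1 (b - a) ≤ 1 := diam hb ha
    have B5 : l1 a ≤ 1 := M_le_one ha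
    obtain ⟨sa1, sa2, sa3, sa4⟩ := sqf ha
    obtain ⟨sd1, sd2, sd3, sd4⟩ := sqf hd
    simp only [makespan, sub_zero, max_self, add_zero, maxl1]
    rcases le_total (l1 (b - a)) (l1 (c - a) + l1 (d - c)) with h' | h'
    · rw [max_eq_right h']; linarith
    · rw [max_eq_left h']; linarith

lemma leaf22i {a c m n : ℝ × ℝ}
    (ha : a ∈ squareS) (hc : c ∈ squareS) (hm : m ∈ squareS) (hn : n ∈ squareS)
    (hya : 0 ≤ a.2) (hym : m.2 ≤ 0) (hyn : n.2 ≤ 0)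
    (hmn : n.1 + n.2 ≤ m.1 + m.2) (hcond : m.1 + m.2 ≤ a.1 - a.2)
    (f5 : 1 < l1 a + l1 (a - m) ∨ a = m) (f6 : 1 < l1 m + l1 (m - a) ∨ a = m)
    (f7 : 1 < l1 m + l1 (m - n) ∨ m = n) (f8 : 1 < l1 n + l1 (n - m) ∨ m = n) :
    Good [a, c, m, n] := by
  refine ⟨.node a (.node c .nil .nil) (.node m (.node n .nil .nil) .nil), ?_, ?_⟩
  · rfl
  · have B3 : l1 (m - a) ≤ 1 - m.1 - m.2 := D3i ha hm hya hym hcond f5 f6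
    have B4 : l1 (n - m) ≤ (m.1 + m.2) - (n.1 + n.2) := D2 hm hn hym hyn hmn f7 f8
    have B5 : l1 a ≤ 1 := M_le_one ha
    have B6 : l1 (c - a) ≤ 1 := diam hc ha
    obtain ⟨sn1, sn2, sn3, sn4⟩ := sqf hn
    simp only [makespan, sub_zero, max_self, add_zero, maxl1]
    rcases le_total (l1 (c - a)) (l1 (m - a) + l1 (n - m)) with h' | h'
    · rw [max_eq_right h']; linarith
    · rw [max_eq_left h']; linarith

lemma leaf22ii {a c m n : ℝ × ℝ}
    (ha : a ∈ squareS) (hc : c ∈ squareS) (hm : m ∈ squareS) (hn : n ∈ squareS)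
    (hya : 0 ≤ a.2) (hyc : 0 ≤ c.2) (hym : m.2 ≤ 0)
    (hac : c.1 - c.2 ≤ a.1 - a.2) (hcond : a.1 - a.2 ≤ m.1 + m.2)
    (f1 : 1 < l1 a + l1 (a - c) ∨ a = c) (f2 : 1 < l1 c + l1 (c - a) ∨ a = c)
    (f5 : 1 < l1 a + l1 (a - m) ∨ a = m) (f6 : 1 < l1 m + l1 (m - a) ∨ a = m) :
    Good [a, c, m, n] := by
  refine ⟨.node m (.node n .nil .nil) (.node a (.node c .nil .nil) .nil), ?_, ?_⟩
  · exact Multiset.coe_eq_coe.2 (List.perm_append_comm (l₁ := [m, n]) (l₂ := [a, c]))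
  · have B1 : l1 (c - a) ≤ (a.1 - a.2) - (c.1 - c.2) := D1 ha hc hya hyc hac f1 f2
    have B3 : l1 (a - m) ≤ 1 - a.1 + a.2 := by
      rw [l1_sub_comm]; exact D3ii ha hm hya hym hcond f5 f6
    have B4 : l1 (n - m) ≤ 1 := diam hn hm
    have B5 : l1 m ≤ 1 := M_le_one hm
    obtain ⟨sc1, sc2, sc3, sc4⟩ := sqf hc
    simp only [makespan, sub_zero, max_self, add_zero, maxl1]
    rcases le_total (l1 (n - m)) (l1 (a - m) + l1 (c - a)) with h' | h'
    · rw [max_eq_right h']; linarith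
    · rw [max_eq_left h']; linarith

lemma list_len3 {l : List (ℝ × ℝ)} (h : l.length = 3) : ∃ x y z, l = [x, y, z] := by
  rcases l with _ | ⟨x, _ | ⟨y, _ | ⟨z, _ | ⟨w, t⟩⟩⟩⟩ <;> simp at h
  exact ⟨x, y, z, rfl⟩

lemma list_len2 {l : List (ℝ × ℝ)} (h : l.length = 2) : ∃ x y, l = [x, y] := by
  rcases l with _ | ⟨x, _ | ⟨y, _ | ⟨z, t⟩⟩⟩ <;> simp at h
  exact ⟨x, y, rfl⟩

lemma list_len1 {l : List (ℝ × ℝ)} (h : l.length = 1) : ∃ x, l = [x] := by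
  rcases l with _ | ⟨x, _ | ⟨y, t⟩⟩ <;> simp at h
  exact ⟨x, rfl⟩

lemma filter_map' {α β : Type*} (f : α → β) (p : β → Bool) (l : List α) :
    (l.map f).filter p = (l.filter (fun a => p (f a))).map f := by
  induction l with
  | nil => rfl
  | cons x xs ih =>
    simp only [List.map_cons, List.filter_cons]
    cases h : p (f x) <;> simp [h, ih]

lemma core5 (ps : List (ℝ × ℝ)) (h5 : ps.length = 5)
    (hsq : ∀ p ∈ ps, p ∈ squareS)
    (hpr : ∀ p ∈ ps, ∀ q ∈ ps, 1 < l1 p + l1 (p - q) ∨ p = q)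
    (hcnt : 3 ≤ (ps.filter (fun p => decide (0 ≤ p.2))).length) : Good ps := by
  have key : ∃ U L : List (ℝ × ℝ), (U ++ L).Perm ps ∧ (∀ p ∈ U, 0 ≤ p.2) ∧
      (∀ p ∈ L, p.2 ≤ 0) ∧ 3 ≤ U.length ∧ U.length + L.length = 5 := by
    refine ⟨_, _, List.filter_append_perm _ ps, ?_, ?_, hcnt, ?_⟩
    · intro p hp
      have := (List.mem_filter.1 hp).2
      simpa using this
    · intro p hp
      have := (List.mem_filter.1 hp).2
      simp at this
      linarith
    · rw [← List.length_append, (List.filter_append_perm _ ps).length_eq, h5]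
  obtain ⟨U, L, hUL, hUm, hLm, hUlen, hsum⟩ := key
  have hUps : ∀ p ∈ U, p ∈ ps := fun p hp => hUL.mem_iff.1 (List.mem_append_left _ hp)
  have hLps : ∀ p ∈ L, p ∈ ps := fun p hp => hUL.mem_iff.1 (List.mem_append_right _ hp)
  have hcase : U.length = 3 ∨ U.length = 4 ∨ U.length = 5 := by omega
  have hpr2 : ∀ p ∈ ps, ∀ q ∈ ps, 1 < l1 q + l1 (q - p) ∨ p = q :=
    fun p hp q hq => (hpr q hq p hp).imp_right Eq.symm
  -- first two extractions from U (length ≥ 3 so nonempty twice)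
  obtain ⟨a, t1, hp1, hmin1⟩ := extract_min (fun p => p.2 - p.1) U
    (by intro h; rw [h] at hUlen; simp at hUlen)
  have ht1len : t1.length + 1 = U.length := by
    have := hp1.length_eq; simp at this; omega
  obtain ⟨c, t2, hp2, hmin2⟩ := extract_min (fun p => p.2 - p.1) t1
    (by intro h; rw [h] at ht1len; simp at ht1len; omega)
  have ht2len : t2.length + 2 = U.length := by
    have := hp2.length_eq; simp at this; omega
  have hUac : U.Perm (a :: c :: t2) := hp1.trans (hp2.cons a)
  have haU : a ∈ U := hp1.mem_iff.2 (by simp)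
  have hcU : c ∈ U := hUac.mem_iff.2 (by simp)
  have haps : a ∈ ps := hUps a haU
  have hcps : c ∈ ps := hUps c hcU
  have hya : 0 ≤ a.2 := hUm a haU
  have hyc : 0 ≤ c.2 := hUm c hcU
  have hac : c.1 - c.2 ≤ a.1 - a.2 := by
    have := hmin1 c (hp2.mem_iff.2 (by simp)); linarith
  rcases hcase with h3 | h4 | h5'
  · -- U.length = 3, L.length = 2
    obtain ⟨x, rfl⟩ := list_len1 (by omega : t2.length = 1)
    obtain ⟨m0, n0, rfl⟩ := list_len2 (by omega : L.length = 2)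
    -- sort the two lower points by descending x+y
    obtain ⟨m, n, hLp, hmn⟩ : ∃ m n, ([m0, n0] : List (ℝ × ℝ)).Perm [m, n] ∧
        n.1 + n.2 ≤ m.1 + m.2 := by
      rcases le_total (n0.1 + n0.2) (m0.1 + m0.2) with h | h
      · exact ⟨m0, n0, List.Perm.refl _, h⟩
      · exact ⟨n0, m0, List.Perm.swap n0 m0 [], h⟩
    have hmL : m ∈ ([m0, n0] : List (ℝ × ℝ)) := hLp.mem_iff.2 (by simp)
    have hnL : n ∈ ([m0, n0] : List (ℝ × ℝ)) := hLp.mem_iff.2 (by simp)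
    have hmps : m ∈ ps := hLps m hmL
    have hnps : n ∈ ps := hLps n hnL
    have hym : m.2 ≤ 0 := hLm m hmL
    have hyn : n.2 ≤ 0 := hLm n hnL
    have hxU : x ∈ U := hUac.mem_iff.2 (by simp)
    have hxps : x ∈ ps := hUps x hxU
    have hyx : 0 ≤ x.2 := hUm x hxU
    have hax : x.1 - x.2 ≤ a.1 - a.2 := by
      have := hmin1 x (hp2.mem_iff.2 (by simp)); linarith
    have hcx : x.1 - x.2 ≤ c.1 - c.2 := by
      have := hmin2 x (by simp); linarith
    have hbig : ps.Perm [a, c, x, m, n] :=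
      (hUL.symm.trans (hUac.append hLp))
    rcases le_total (m.1 + m.2) (a.1 - a.2) with hcnd | hcnd
    · exact good_perm hbig (leaf32i (hsq a haps) (hsq c hcps) (hsq x hxps)
        (hsq m hmps) (hsq n hnps) hya hyc hyx hym hyn hac hcx hmn hcnd
        (hpr a haps c hcps) (hpr2 a haps c hcps) (hpr c hcps x hxps) (hpr2 c hcps x hxps)
        (hpr a haps m hmps) (hpr2 a haps m hmps) (hpr m hmps n hnps) (hpr2 m hmps n hnps))
    · exact good_perm hbig (leaf32ii (hsq a haps) (hsq c hcps) (hsq x hxps)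
        (hsq m hmps) (hsq n hnps) hya hyc hyx hym hac hax hcnd
        (hpr a haps c hcps) (hpr2 a haps c hcps) (hpr a haps x hxps) (hpr2 a haps x hxps)
        (hpr a haps m hmps) (hpr2 a haps m hmps))
  · -- U.length = 4, L.length = 1
    obtain ⟨d, e, rfl⟩ := list_len2 (by omega : t2.length = 2)
    obtain ⟨b0, rfl⟩ := list_len1 (by omega : L.length = 1)
    have hdU : d ∈ U := hUac.mem_iff.2 (by simp)
    have heU : e ∈ U := hUac.mem_iff.2 (by simp)
    have hdps : d ∈ ps := hUps d hdU
    have heps : e ∈ ps := hUps e heU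
    have hbps : b0 ∈ ps := hLps b0 (by simp)
    have hyd : 0 ≤ d.2 := hUm d hdU
    have hye : 0 ≤ e.2 := hUm e heU
    have hcd : d.1 - d.2 ≤ c.1 - c.2 := by have := hmin2 d (by simp); linarith
    have hce : e.1 - e.2 ≤ c.1 - c.2 := by have := hmin2 e (by simp); linarith
    have hbig : ps.Perm [a, c, d, e, b0] :=
      hUL.symm.trans (hUac.append_right [b0])
    exact good_perm hbig (leafU (hsq a haps) (hsq c hcps) (hsq d hdps) (hsq e heps)
      (hsq b0 hbps) hya hyc hyd hye hac hcd hce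
      (hpr a haps c hcps) (hpr2 a haps c hcps) (hpr c hcps d hdps) (hpr2 c hcps d hdps)
      (hpr c hcps e heps) (hpr2 c hcps e heps))
  · -- U.length = 5, L = []
    obtain ⟨d, e, b0, rfl⟩ := list_len3 (by omega : t2.length = 3)
    have hLnil : L = [] := List.length_eq_zero_iff.1 (by omega)
    subst hLnil
    have hdU : d ∈ U := hUac.mem_iff.2 (by simp)
    have heU : e ∈ U := hUac.mem_iff.2 (by simp)
    have hbU : b0 ∈ U := hUac.mem_iff.2 (by simp)
    have hdps : d ∈ ps := hUps d hdU
    have heps : e ∈ ps := hUps e heU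
    have hbps : b0 ∈ ps := hUps b0 hbU
    have hyd : 0 ≤ d.2 := hUm d hdU
    have hye : 0 ≤ e.2 := hUm e heU
    have hcd : d.1 - d.2 ≤ c.1 - c.2 := by have := hmin2 d (by simp); linarith
    have hce : e.1 - e.2 ≤ c.1 - c.2 := by have := hmin2 e (by simp); linarith
    have hbig : ps.Perm [a, c, d, e, b0] := by
      have : ps.Perm U := by simpa using hUL.symm
      exact this.trans hUac
    exact good_perm hbig (leafU (hsq a haps) (hsq c hcps) (hsq d hdps) (hsq e heps)
      (hsq b0 hbps) hya hyc hyd hye hac hcd hce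
      (hpr a haps c hcps) (hpr2 a haps c hcps) (hpr c hcps d hdps) (hpr2 c hcps d hdps)
      (hpr c hcps e heps) (hpr2 c hcps e heps))

lemma core4 (ps : List (ℝ × ℝ)) (h4 : ps.length = 4)
    (hsq : ∀ p ∈ ps, p ∈ squareS)
    (hpr : ∀ p ∈ ps, ∀ q ∈ ps, 1 < l1 p + l1 (p - q) ∨ p = q)
    (hcnt : 2 ≤ (ps.filter (fun p => decide (0 ≤ p.2))).length) : Good ps := by
  have key : ∃ U L : List (ℝ × ℝ), (U ++ L).Perm ps ∧ (∀ p ∈ U, 0 ≤ p.2) ∧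
      (∀ p ∈ L, p.2 ≤ 0) ∧ 2 ≤ U.length ∧ U.length + L.length = 4 := by
    refine ⟨_, _, List.filter_append_perm _ ps, ?_, ?_, hcnt, ?_⟩
    · intro p hp
      have := (List.mem_filter.1 hp).2
      simpa using this
    · intro p hp
      have := (List.mem_filter.1 hp).2
      simp at this
      linarith
    · rw [← List.length_append, (List.filter_append_perm _ ps).length_eq, h4]
  obtain ⟨U, L, hUL, hUm, hLm, hUlen, hsum⟩ := key
  have hUps : ∀ p ∈ U, p ∈ ps := fun p hp => hUL.mem_iff.1 (List.mem_append_left _ hp)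
  have hLps : ∀ p ∈ L, p ∈ ps := fun p hp => hUL.mem_iff.1 (List.mem_append_right _ hp)
  have hpr2 : ∀ p ∈ ps, ∀ q ∈ ps, 1 < l1 q + l1 (q - p) ∨ p = q :=
    fun p hp q hq => (hpr q hq p hp).imp_right Eq.symm
  obtain ⟨a, t1, hp1, hmin1⟩ := extract_min (fun p => p.2 - p.1) U
    (by intro h; rw [h] at hUlen; simp at hUlen)
  have ht1len : t1.length + 1 = U.length := by
    have := hp1.length_eq; simp at this; omega
  have haU : a ∈ U := hp1.mem_iff.2 (by simp)
  have haps : a ∈ ps := hUps a haU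
  have hya : 0 ≤ a.2 := hUm a haU
  rcases (by omega : U.length = 2 ∨ U.length = 3 ∨ U.length = 4) with h2 | h3 | h4'
  · -- U.length = 2, L.length = 2
    obtain ⟨c, rfl⟩ := list_len1 (by omega : t1.length = 1)
    obtain ⟨m0, n0, rfl⟩ := list_len2 (by omega : L.length = 2)
    obtain ⟨m, n, hLp, hmn⟩ : ∃ m n, ([m0, n0] : List (ℝ × ℝ)).Perm [m, n] ∧
        n.1 + n.2 ≤ m.1 + m.2 := by
      rcases le_total (n0.1 + n0.2) (m0.1 + m0.2) with h | h
      · exact ⟨m0, n0, List.Perm.refl _, h⟩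
      · exact ⟨n0, m0, List.Perm.swap n0 m0 [], h⟩
    have hmL : m ∈ ([m0, n0] : List (ℝ × ℝ)) := hLp.mem_iff.2 (by simp)
    have hnL : n ∈ ([m0, n0] : List (ℝ × ℝ)) := hLp.mem_iff.2 (by simp)
    have hmps : m ∈ ps := hLps m hmL
    have hnps : n ∈ ps := hLps n hnL
    have hym : m.2 ≤ 0 := hLm m hmL
    have hyn : n.2 ≤ 0 := hLm n hnL
    have hcU : c ∈ U := hp1.mem_iff.2 (by simp)
    have hcps : c ∈ ps := hUps c hcU
    have hyc : 0 ≤ c.2 := hUm c hcU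
    have hac : c.1 - c.2 ≤ a.1 - a.2 := by
      have := hmin1 c (by simp); linarith
    have hbig : ps.Perm [a, c, m, n] := hUL.symm.trans (hp1.append hLp)
    rcases le_total (m.1 + m.2) (a.1 - a.2) with hcnd | hcnd
    · exact good_perm hbig (leaf22i (hsq a haps) (hsq c hcps) (hsq m hmps) (hsq n hnps)
        hya hym hyn hmn hcnd
        (hpr a haps m hmps) (hpr2 a haps m hmps) (hpr m hmps n hnps) (hpr2 m hmps n hnps))
    · exact good_perm hbig (leaf22ii (hsq a haps) (hsq c hcps) (hsq m hmps) (hsq n hnps)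
        hya hyc hym hac hcnd
        (hpr a haps c hcps) (hpr2 a haps c hcps) (hpr a haps m hmps) (hpr2 a haps m hmps))
  · -- U.length = 3, L.length = 1
    obtain ⟨c, t2, hp2, hmin2⟩ := extract_min (fun p => p.2 - p.1) t1
      (by intro h; rw [h] at ht1len; simp at ht1len; omega)
    have ht2len : t2.length + 2 = U.length := by
      have := hp2.length_eq; simp at this; omega
    obtain ⟨d, rfl⟩ := list_len1 (by omega : t2.length = 1)
    obtain ⟨b0, rfl⟩ := list_len1 (by omega : L.length = 1)
    have hUac : U.Perm [a, c, d] := hp1.trans (hp2.cons a)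
    have hcU : c ∈ U := hUac.mem_iff.2 (by simp)
    have hdU : d ∈ U := hUac.mem_iff.2 (by simp)
    have hcps : c ∈ ps := hUps c hcU
    have hdps : d ∈ ps := hUps d hdU
    have hbps : b0 ∈ ps := hLps b0 (by simp)
    have hyc : 0 ≤ c.2 := hUm c hcU
    have hyd : 0 ≤ d.2 := hUm d hdU
    have hac : c.1 - c.2 ≤ a.1 - a.2 := by
      have := hmin1 c (hp2.mem_iff.2 (by simp)); linarith
    have hcd : d.1 - d.2 ≤ c.1 - c.2 := by
      have := hmin2 d (by simp); linarith
    have hbig : ps.Perm [a, c, d, b0] := hUL.symm.trans (hUac.append_right [b0])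
    exact good_perm hbig (leafU4 (hsq a haps) (hsq c hcps) (hsq d hdps) (hsq b0 hbps)
      hya hyc hyd hac hcd
      (hpr a haps c hcps) (hpr2 a haps c hcps) (hpr c hcps d hdps) (hpr2 c hcps d hdps))
  · -- U.length = 4, L = []
    obtain ⟨c, t2, hp2, hmin2⟩ := extract_min (fun p => p.2 - p.1) t1
      (by intro h; rw [h] at ht1len; simp at ht1len; omega)
    have ht2len : t2.length + 2 = U.length := by
      have := hp2.length_eq; simp at this; omega
    obtain ⟨d, b0, rfl⟩ := list_len2 (by omega : t2.length = 2)
    have hLnil : L = [] := List.length_eq_zero_iff.1 (by omega)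
    subst hLnil
    have hUac : U.Perm [a, c, d, b0] := hp1.trans (hp2.cons a)
    have hcU : c ∈ U := hUac.mem_iff.2 (by simp)
    have hdU : d ∈ U := hUac.mem_iff.2 (by simp)
    have hbU : b0 ∈ U := hUac.mem_iff.2 (by simp)
    have hcps : c ∈ ps := hUps c hcU
    have hdps : d ∈ ps := hUps d hdU
    have hbps : b0 ∈ ps := hUps b0 hbU
    have hyc : 0 ≤ c.2 := hUm c hcU
    have hyd : 0 ≤ d.2 := hUm d hdU
    have hac : c.1 - c.2 ≤ a.1 - a.2 := by
      have := hmin1 c (hp2.mem_iff.2 (by simp)); linarith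
    have hcd : d.1 - d.2 ≤ c.1 - c.2 := by
      have := hmin2 d (by simp); linarith
    have hbig : ps.Perm [a, c, d, b0] := by
      have : ps.Perm U := by simpa using hUL.symm
      exact this.trans hUac
    exact good_perm hbig (leafU4 (hsq a haps) (hsq c hcps) (hsq d hdps) (hsq b0 hbps)
      hya hyc hyd hac hcd
      (hpr a haps c hcps) (hpr2 a haps c hcps) (hpr c hcps d hdps) (hpr2 c hcps d hdps))

lemma cons_of_mem : ∀ (l : List (ℝ × ℝ)) (a : ℝ × ℝ), a ∈ l → ∃ t, l.Perm (a :: t) := by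
  intro l
  induction l with
  | nil => intro a ha; simp at ha
  | cons x xs ih =>
    intro a ha
    rcases List.mem_cons.1 ha with rfl | ha'
    · exact ⟨xs, List.Perm.refl _⟩
    · obtain ⟨t, ht⟩ := ih a ha'
      exact ⟨x :: t, (ht.cons x).trans (List.Perm.swap a x t)⟩

lemma pair_perm {l : List (ℝ × ℝ)} {p q : ℝ × ℝ} (hp : p ∈ l) (hq : q ∈ l) (hne : p ≠ q) :
    ∃ rest, l.Perm (p :: q :: rest) := by
  obtain ⟨t, ht⟩ := cons_of_mem l p hp
  have hq' : q ∈ t := by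
    rcases List.mem_cons.1 (ht.mem_iff.1 hq) with h | h
    · exact absurd h.symm hne
    · exact h
  obtain ⟨t2, ht2⟩ := cons_of_mem t q hq'
  exact ⟨t2, ht.trans (ht2.cons p)⟩

lemma main5 (ps : List (ℝ × ℝ)) (h5 : ps.length = 5)
    (hsq : ∀ p ∈ ps, p ∈ squareS) : Good ps := by
  classical
  by_cases hW : ∃ x y rest, ps.Perm (x :: y :: rest) ∧ l1 x + l1 (y - x) ≤ 1
  · obtain ⟨x, y, rest, hperm, hle⟩ := hW
    obtain ⟨r, s, b, rfl⟩ : ∃ u v w, rest = [u, v, w] := by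
      have := hperm.length_eq
      rw [h5] at this
      exact list_len3 (by simp at this; omega)
    have hmem : ∀ z ∈ ([x, y, r, s, b] : List (ℝ × ℝ)), z ∈ squareS := by
      intro z hz; exact hsq z (hperm.mem_iff.2 hz)
    exact good_perm hperm (leafW1 (hmem x (by simp)) (hmem y (by simp)) (hmem r (by simp))
      (hmem s (by simp)) (hmem b (by simp)) hle)
  · push_neg at hW
    have hpr : ∀ p ∈ ps, ∀ q ∈ ps, 1 < l1 p + l1 (p - q) ∨ p = q := by
      intro p hp q hq
      rcases eq_or_ne p q with h | h
      · exact Or.inr h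
      · left
        obtain ⟨rest, h3⟩ := pair_perm hp hq h
        have := hW p q _ h3
        rwa [l1_sub_comm]
    by_cases hcnt : 3 ≤ (ps.filter (fun p => decide (0 ≤ p.2))).length
    · exact core5 ps h5 hsq hpr hcnt
    · apply good_fl
      apply core5
      · simp [h5]
      · intro p hp
        obtain ⟨q, hq, rfl⟩ := List.mem_map.1 hp
        exact fl_mem (hsq q hq)
      · intro p hp q hq
        obtain ⟨p', hp', rfl⟩ := List.mem_map.1 hp
        obtain ⟨q', hq', rfl⟩ := List.mem_map.1 hq
        rcases hpr p' hp' q' hq' with h | h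
        · left; rwa [l1_fl, l1_fl_sub]
        · right; rw [h]
      · rw [filter_map' fl _ ps, List.length_map]
        have hsub : (ps.filter (fun p => !decide (0 ≤ p.2))).Sublist
            (ps.filter (fun a => decide (0 ≤ (fl a).2))) := by
          apply List.monotone_filter_right
          intro z hz
          simp only [Bool.not_eq_true', decide_eq_false_iff_not, not_le] at hz
          simp only [fl, decide_eq_true_eq]
          simp [show 0 ≤ -z.2 by linarith]
        have hlen2 := hsub.length_le
        have htot : (ps.filter (fun p => decide (0 ≤ p.2))).length +
            (ps.filter (fun p => !decide (0 ≤ p.2))).length = 5 := by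
          rw [← List.length_append, (List.filter_append_perm _ ps).length_eq, h5]
        omega

lemma main4 (ps : List (ℝ × ℝ)) (h4 : ps.length = 4)
    (hsq : ∀ p ∈ ps, p ∈ squareS) : Good ps := by
  classical
  by_cases hW : ∃ x y rest, ps.Perm (x :: y :: rest) ∧ l1 x + l1 (y - x) ≤ 1
  · obtain ⟨x, y, rest, hperm, hle⟩ := hW
    obtain ⟨r, b, rfl⟩ : ∃ u w, rest = [u, w] := by
      have := hperm.length_eq
      rw [h4] at this
      exact list_len2 (by simp at this; omega)
    have hmem : ∀ z ∈ ([x, y, r, b] : List (ℝ × ℝ)), z ∈ squareS := by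
      intro z hz; exact hsq z (hperm.mem_iff.2 hz)
    exact good_perm hperm (leafW14 (hmem x (by simp)) (hmem y (by simp)) (hmem r (by simp))
      (hmem b (by simp)) hle)
  · push_neg at hW
    have hpr : ∀ p ∈ ps, ∀ q ∈ ps, 1 < l1 p + l1 (p - q) ∨ p = q := by
      intro p hp q hq
      rcases eq_or_ne p q with h | h
      · exact Or.inr h
      · left
        obtain ⟨rest, h3⟩ := pair_perm hp hq h
        have := hW p q _ h3
        rwa [l1_sub_comm]
    by_cases hcnt : 2 ≤ (ps.filter (fun p => decide (0 ≤ p.2))).length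
    · exact core4 ps h4 hsq hpr hcnt
    · apply good_fl
      apply core4
      · simp [h4]
      · intro p hp
        obtain ⟨q, hq, rfl⟩ := List.mem_map.1 hp
        exact fl_mem (hsq q hq)
      · intro p hp q hq
        obtain ⟨p', hp', rfl⟩ := List.mem_map.1 hp
        obtain ⟨q', hq', rfl⟩ := List.mem_map.1 hq
        rcases hpr p' hp' q' hq' with h | h
        · left; rwa [l1_fl, l1_fl_sub]
        · right; rw [h]
      · rw [filter_map' fl _ ps, List.length_map]
        have hsub : (ps.filter (fun p => !decide (0 ≤ p.2))).Sublist
            (ps.filter (fun a => decide (0 ≤ (fl a).2))) := by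
          apply List.monotone_filter_right
          intro z hz
          simp only [Bool.not_eq_true', decide_eq_false_iff_not, not_le] at hz
          simp only [fl, decide_eq_true_eq]
          simp [show 0 ≤ -z.2 by linarith]
        have hlen2 := hsub.length_le
        have htot : (ps.filter (fun p => decide (0 ≤ p.2))).length +
            (ps.filter (fun p => !decide (0 ≤ p.2))).length = 4 := by
          rw [← List.length_append, (List.filter_append_perm _ ps).length_eq, h4]
        omega

end FTPAux

open FTPAux in
/-- a robot at the corner (0,0) of the square `squareS` can wake up any
`n ≤ 5` robots inside the square within two time units (ℓ1-norm). -/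
theorem ftp_square_five_robots (ps : List (ℝ × ℝ)) (hlen : ps.length ≤ 5)
    (hin : ∀ p ∈ ps, p ∈ squareS) :
    ∃ T : BTree (ℝ × ℝ), T.labels = ↑ps ∧ makespan l1 0 T ≤ 2 := by
  rcases ps with _ | ⟨p1, _ | ⟨p2, _ | ⟨p3, _ | ⟨p4, _ | ⟨p5, rest⟩⟩⟩⟩⟩
  · exact ⟨.nil, rfl, by norm_num [makespan]⟩
  · refine ⟨.node p1 .nil .nil, rfl, ?_⟩
    have h1 := M_le_one (hin p1 (by simp))
    simp only [makespan, sub_zero, max_self, add_zero]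
    linarith
  · refine ⟨.node p1 (.node p2 .nil .nil) .nil, rfl, ?_⟩
    have h1 := M_le_one (hin p1 (by simp))
    have h2 := diam (hin p2 (by simp)) (hin p1 (by simp))
    simp only [makespan, sub_zero, max_self, add_zero, maxl1]
    linarith
  · refine ⟨.node p1 (.node p2 .nil .nil) (.node p3 .nil .nil), rfl, ?_⟩
    have h1 := M_le_one (hin p1 (by simp))
    have h2 := diam (hin p2 (by simp)) (hin p1 (by simp))
    have h3 := diam (hin p3 (by simp)) (hin p1 (by simp))
    simp only [makespan, sub_zero, max_self, add_zero]
    rcases le_total (l1 (p2 - p1)) (l1 (p3 - p1)) with h | h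
    · rw [max_eq_right h]; linarith
    · rw [max_eq_left h]; linarith
  · exact main4 [p1, p2, p3, p4] rfl hin
  · have hrest : rest = [] := by
      simp only [List.length_cons] at hlen
      exact List.eq_nil_of_length_eq_zero (by omega)
    subst hrest
    exact main5 [p1, p2, p3, p4, p5] rfl hin
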